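/- For any unit vector v ∈ ℂ^d and any density matrix σ on ℂ^d, the maximum of tr(M(vv† − σ)) over all Hermitian M with 0 ≼ M ≼ 1 is attained by a matrix of rank at most 1. -/

import Mathlib

open scoped BigOperators ComplexOrder
open scoped Matrix

/-- the maximum of `tr(M (vv† − σ))` over Hermitian `0 ≼ M ≼ 1` is attained
at a matrix of rank at most 1. -/
theorem stmt5 (d : ℕ) (v : Fin d → ℂ) (hv : ∑ i, ‖v i‖ ^ 2 = 1)
    (σ : Matrix (Fin d) (Fin d) ℂ) (hσ : σ.PosSemidef) (hσtr : σ.trace = 1) :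
    ∃ M : Matrix (Fin d) (Fin d) ℂ, M.PosSemidef ∧ (1 - M).PosSemidef ∧ M.rank ≤ 1 ∧
      ∀ N : Matrix (Fin d) (Fin d) ℂ, N.PosSemidef → (1 - N).PosSemidef →
        (Matrix.trace (N * (Matrix.vecMulVec v (star v) - σ))).re ≤
          (Matrix.trace (M * (Matrix.vecMulVec v (star v) - σ))).re := by
  set A := Matrix.vecMulVec v (star v) - σ with hAdef
  have hvv : (Matrix.vecMulVec v (star v)).IsHermitian := by
    ext i j
    simp [Matrix.conjTranspose_apply, Matrix.vecMulVec_apply, mul_comm]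
  have hA : A.IsHermitian := hvv.sub hσ.1
  set μ : Fin d → ℝ := hA.eigenvalues with hμ
  set U : Matrix (Fin d) (Fin d) ℂ := (hA.eigenvectorUnitary : Matrix (Fin d) (Fin d) ℂ) with hU
  set D : Matrix (Fin d) (Fin d) ℂ := Matrix.diagonal (Complex.ofReal ∘ μ) with hD
  have hspec : A = U * D * Uᴴ := by
    simpa [← Matrix.star_eq_conjTranspose] using hA.spectral_theorem
  have hU2 : Uᴴ * U = 1 := by
    have h := (Matrix.mem_unitaryGroup_iff').mp hA.eigenvectorUnitary.2
    rwa [Matrix.star_eq_conjTranspose] at h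
  have hU1 : U * Uᴴ = 1 := by
    have h := (Matrix.mem_unitaryGroup_iff).mp hA.eigenvectorUnitary.2
    rwa [Matrix.star_eq_conjTranspose] at h
  -- quadratic form bound
  have L2 : ∀ w : Fin d → ℂ, (star w ⬝ᵥ (A *ᵥ w)).re ≤ ‖star v ⬝ᵥ w‖ ^ 2 := by
    intro w
    have hσw : 0 ≤ star w ⬝ᵥ (σ *ᵥ w) := hσ.dotProduct_mulVec_nonneg w
    have h1 : A *ᵥ w = Matrix.vecMulVec v (star v) *ᵥ w - σ *ᵥ w := by
      rw [hAdef, Matrix.sub_mulVec]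
    have h2 : Matrix.vecMulVec v (star v) *ᵥ w = fun i => v i * (star v ⬝ᵥ w) := by
      funext i
      simp [Matrix.mulVec, Matrix.vecMulVec_apply, dotProduct, Finset.mul_sum, mul_assoc]
    have h3 : star w ⬝ᵥ (fun i => v i * (star v ⬝ᵥ w)) = (star w ⬝ᵥ v) * (star v ⬝ᵥ w) := by
      simp [dotProduct, Finset.sum_mul, mul_assoc]
    have h4 : star w ⬝ᵥ v = star (star v ⬝ᵥ w) := by
      rw [Matrix.star_dotProduct]
    have h5 : (star (star v ⬝ᵥ w) * (star v ⬝ᵥ w)).re = ‖star v ⬝ᵥ w‖ ^ 2 := by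
      rw [Complex.star_def, ← Complex.normSq_eq_conj_mul_self]
      simp [Complex.normSq_apply, Complex.sq_norm]
    have h6 : 0 ≤ (star w ⬝ᵥ (σ *ᵥ w)).re := by
      rw [Complex.le_def] at hσw; simpa using hσw.1
    rw [h1, dotProduct_sub, h2, h3, h4, Complex.sub_re, h5]
    linarith
  -- quadratic form in the eigenbasis
  have L1 : ∀ y : Fin d → ℂ,
      (star (U *ᵥ y) ⬝ᵥ (A *ᵥ (U *ᵥ y))).re = ∑ i, μ i * ‖y i‖ ^ 2 := by
    intro y
    have h1 : A *ᵥ (U *ᵥ y) = U *ᵥ (D *ᵥ y) := by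
      rw [Matrix.mulVec_mulVec, Matrix.mulVec_mulVec, hspec, Matrix.mul_assoc, hU2, Matrix.mul_one]
    have h2 : star (U *ᵥ y) ⬝ᵥ (U *ᵥ (D *ᵥ y)) = star y ⬝ᵥ (D *ᵥ y) := by
      rw [Matrix.star_mulVec, Matrix.dotProduct_mulVec, Matrix.vecMul_vecMul, hU2,
        Matrix.vecMul_one]
    rw [h1, h2]
    have h3 : star y ⬝ᵥ (D *ᵥ y) = ∑ i, ((μ i : ℂ) * (‖y i‖ ^ 2 : ℝ)) := by
      rw [hD]
      simp only [dotProduct, Matrix.mulVec_diagonal, Pi.star_apply, Function.comp]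
      refine Finset.sum_congr rfl fun i _ => ?_
      rw [RCLike.star_def, mul_comm ((μ i : ℂ)) (y i), ← mul_assoc, mul_comm ((starRingEnd ℂ) (y i)) (y i),
        Complex.mul_conj, Complex.normSq_eq_norm_sq]
      push_cast
      ring
    rw [h3]
    simp [← Complex.ofReal_mul, ← Complex.ofReal_pow]
  -- overlaps with the eigenvectors
  set z : Fin d → ℂ := Uᴴ *ᵥ v with hz
  have hvw : ∀ y : Fin d → ℂ, star v ⬝ᵥ (U *ᵥ y) = star z ⬝ᵥ y := by
    intro y
    rw [Matrix.dotProduct_mulVec, hz, Matrix.star_mulVec, Matrix.conjTranspose_conjTranspose]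
  have C1 : ∀ i, μ i ≤ ‖z i‖ ^ 2 := by
    intro i
    have h := L2 (U *ᵥ (Pi.single i 1 : Fin d → ℂ))
    rw [L1, hvw] at h
    have hls : ∑ j, μ j * ‖(Pi.single i 1 : Fin d → ℂ) j‖ ^ 2 = μ i := by
      have hterm : ∀ j, μ j * ‖(Pi.single i 1 : Fin d → ℂ) j‖ ^ 2 = if j = i then μ i else 0 := by
        intro j
        rcases eq_or_ne j i with rfl | hj
        · simp
        · simp [Pi.single_apply, hj]
      rw [Finset.sum_congr rfl fun j _ => hterm j, Finset.sum_ite_eq' Finset.univ i]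
      simp
    have hrs : star z ⬝ᵥ (Pi.single i 1 : Fin d → ℂ) = star (z i) := by
      simp [dotProduct_single]
    rw [hls, hrs] at h
    simpa [norm_star] using h
  have C2 : ∀ i j, i ≠ j → ‖z j‖ ^ 2 * μ i + ‖z i‖ ^ 2 * μ j ≤ 0 := by
    intro i j hij
    set y : Fin d → ℂ := Pi.single i (star (z j)) + Pi.single j (-(star (z i))) with hy
    have h := L2 (U *ᵥ y)
    rw [L1, hvw] at h
    have hdz : star z ⬝ᵥ y = 0 := by
      rw [hy, dotProduct_add, dotProduct_single, dotProduct_single]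
      simp
      ring
    have hyi : y i = star (z j) := by
      simp [hy, Pi.single_apply, hij, Ne.symm hij]
    have hyj : y j = -(star (z i)) := by
      simp [hy, Pi.single_apply, hij, Ne.symm hij]
    have hsum : ∑ t, μ t * ‖y t‖ ^ 2 = ‖z j‖ ^ 2 * μ i + ‖z i‖ ^ 2 * μ j := by
      have hsplit : ∀ t, μ t * ‖y t‖ ^ 2 =
          (Pi.single i (μ i * ‖z j‖ ^ 2) + Pi.single j (μ j * ‖z i‖ ^ 2) : Fin d → ℝ) t := by
        intro t
        rcases eq_or_ne t i with rfl | hti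
        · simp [hyi, Pi.single_apply, hij, Ne.symm hij, norm_star]
        · rcases eq_or_ne t j with rfl | htj
          · simp [hyj, Pi.single_apply, hij, Ne.symm hij, norm_star]
          · have hyt : y t = 0 := by
              simp [hy, Pi.single_apply, hti, htj]
            simp [hyt, Pi.single_apply, hti, htj]
      rw [Finset.sum_congr rfl fun t _ => hsplit t]
      simp [Finset.sum_add_distrib]
      ring
    rw [hdz, hsum] at h
    simpa using h
  -- trace formula
  have htr : ∀ X : Matrix (Fin d) (Fin d) ℂ,
      Matrix.trace (X * A) = ∑ i, (Uᴴ * X * U) i i * (μ i : ℂ) := by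
    intro X
    have h1 : X * A = (X * U) * D * Uᴴ := by
      rw [hspec, ← Matrix.mul_assoc, ← Matrix.mul_assoc]
    rw [h1, Matrix.trace_mul_cycle]
    have h2 : Uᴴ * (X * U) = Uᴴ * X * U := by rw [Matrix.mul_assoc]
    rw [h2, hD]
    simp [Matrix.trace, Matrix.diag, Matrix.mul_diagonal]
  -- diagonal entries of PSD contractions
  have hdiag : ∀ P : Matrix (Fin d) (Fin d) ℂ, P.PosSemidef → ∀ i, 0 ≤ (P i i).re := by
    intro P hP i
    have h := hP.dotProduct_mulVec_nonneg (Pi.single i 1)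
    have hval : star (Pi.single i 1 : Fin d → ℂ) ⬝ᵥ (P *ᵥ (Pi.single i 1 : Fin d → ℂ)) = P i i := by
      rw [Matrix.mulVec_single]
      simp [dotProduct, Pi.single_apply, apply_ite]
    rw [hval] at h
    rw [Complex.le_def] at h
    simpa using h.1
  -- the real part of the trace as a weighted sum of eigenvalues
  have htrace_re : ∀ N : Matrix (Fin d) (Fin d) ℂ,
      (Matrix.trace (N * A)).re = ∑ i, ((Uᴴ * N * U) i i).re * μ i := by
    intro N
    rw [htr N, Complex.re_sum]
    refine Finset.sum_congr rfl fun i _ => ?_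
    simp [Complex.mul_re]
  -- bounds on the diagonal entries of the rotated operator
  have hNbounds : ∀ N : Matrix (Fin d) (Fin d) ℂ, N.PosSemidef → (1 - N).PosSemidef →
      ∀ i, 0 ≤ ((Uᴴ * N * U) i i).re ∧ ((Uᴴ * N * U) i i).re ≤ 1 := by
    intro N hN h1N i
    have hP : (Uᴴ * N * U).PosSemidef := hN.conjTranspose_mul_mul_same U
    have hQ : (1 - Uᴴ * N * U).PosSemidef := by
      have h := h1N.conjTranspose_mul_mul_same U
      have heq : Uᴴ * (1 - N) * U = 1 - Uᴴ * N * U := by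
        rw [Matrix.mul_sub, Matrix.mul_one, Matrix.sub_mul, hU2]
      rwa [heq] at h
    refine ⟨hdiag _ hP i, ?_⟩
    have h := hdiag _ hQ i
    have : ((1 : Matrix (Fin d) (Fin d) ℂ) - Uᴴ * N * U) i i
        = 1 - (Uᴴ * N * U) i i := by
      simp [Matrix.sub_apply, Matrix.one_apply]
    rw [this] at h
    simp only [Complex.sub_re, Complex.one_re] at h
    linarith
  by_cases hpos : ∃ k, 0 < μ k
  · obtain ⟨k, hk⟩ := hpos
    have huniq : ∀ i, i ≠ k → μ i ≤ 0 := by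
      intro i hik
      by_contra hcon
      push_neg at hcon
      have h2 := C2 i k hik
      have h3 := C1 k
      nlinarith [sq_nonneg ‖z i‖, sq_nonneg ‖z k‖]
    set E : Matrix (Fin d) (Fin d) ℂ :=
      Matrix.diagonal (fun i => if i = k then (1 : ℂ) else 0) with hE
    refine ⟨U * E * Uᴴ, ?_, ?_, ?_, ?_⟩
    · refine Matrix.PosSemidef.mul_mul_conjTranspose_same ?_ U
      refine Matrix.PosSemidef.diagonal ?_
      intro i
      by_cases hik : i = k <;> simp [hik]
    · have heq : U * (1 - E) * Uᴴ = 1 - U * E * Uᴴ := by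
        rw [Matrix.mul_sub, Matrix.mul_one, Matrix.sub_mul, hU1]
      rw [← heq]
      refine Matrix.PosSemidef.mul_mul_conjTranspose_same ?_ U
      have h1E : (1 : Matrix (Fin d) (Fin d) ℂ) - E
          = Matrix.diagonal (fun i => if i = k then 0 else (1 : ℂ)) := by
        have hfun : (fun i => (1 : ℂ) - if i = k then 1 else 0)
            = (fun i => if i = k then 0 else (1 : ℂ)) := by
          funext i
          by_cases hik : i = k <;> simp [hik]
        rw [hE, ← Matrix.diagonal_one, Matrix.diagonal_sub, hfun]
      rw [h1E]
      refine Matrix.PosSemidef.diagonal ?_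
      intro i
      by_cases hik : i = k <;> simp [hik]
    · have h1 : (U * E * Uᴴ).rank ≤ E.rank := by
        calc (U * E * Uᴴ).rank ≤ (U * E).rank := Matrix.rank_mul_le_left _ _
          _ ≤ E.rank := Matrix.rank_mul_le_right _ _
      have h2 : E.rank ≤ 1 := by
        rw [hE, Matrix.rank_diagonal]
        refine Fintype.card_le_one_iff.mpr fun a b => ?_
        have ha : a.1 = k := by
          by_contra hcon
          exact a.2 (by simp [hcon])
        have hb : b.1 = k := by
          by_contra hcon
          exact b.2 (by simp [hcon])
        exact Subtype.ext (ha.trans hb.symm)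
      exact h1.trans h2
    · intro N hN h1N
      have hMtr : (Matrix.trace ((U * E * Uᴴ) * A)).re = μ k := by
        rw [htrace_re]
        have hUE : Uᴴ * (U * E * Uᴴ) * U = E := by
          calc Uᴴ * (U * E * Uᴴ) * U = (Uᴴ * U) * E * (Uᴴ * U) := by
                noncomm_ring
            _ = E := by rw [hU2, Matrix.one_mul, Matrix.mul_one]
        rw [hUE]
        have hterm : ∀ i, (E i i).re * μ i = if i = k then μ k else 0 := by
          intro i
          rcases eq_or_ne i k with rfl | hik
          · simp [hE]
          · simp [hE, Matrix.diagonal_apply_eq, hik]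
        rw [Finset.sum_congr rfl fun i _ => hterm i, Finset.sum_ite_eq' Finset.univ k]
        simp
      rw [hMtr, htrace_re]
      have hsum : ∀ i, ((Uᴴ * N * U) i i).re * μ i ≤ if i = k then μ k else 0 := by
        intro i
        obtain ⟨hr0, hr1⟩ := hNbounds N hN h1N i
        rcases eq_or_ne i k with rfl | hik
        · simpa using mul_le_mul_of_nonneg_right hr1 hk.le
        · simp only [hik, if_neg, if_false]
          exact mul_nonpos_of_nonneg_of_nonpos hr0 (huniq i hik)
      calc ∑ i, ((Uᴴ * N * U) i i).re * μ i ≤ ∑ i, if i = k then μ k else 0 :=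
            Finset.sum_le_sum fun i _ => hsum i
        _ = μ k := by rw [Finset.sum_ite_eq' Finset.univ k]; simp
  · push_neg at hpos
    refine ⟨0, Matrix.PosSemidef.zero, by simpa using Matrix.PosSemidef.one, ?_, ?_⟩
    · simp [Matrix.rank_zero]
    · intro N hN h1N
      have h0 : (Matrix.trace ((0 : Matrix (Fin d) (Fin d) ℂ) * A)).re = 0 := by
        simp
      rw [h0, htrace_re]
      refine Finset.sum_nonpos fun i _ => ?_
      exact mul_nonpos_of_nonneg_of_nonpos (hNbounds N hN h1N i).1 (hpos i)
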